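/- Let G be a finite graph with probability weights μ. The following are equivalent: (a) there exists n with ᾱ(G^n) > 1/2; (b) lim_{n→∞} ᾱ(G^n) = 1; (c) there is an independent set I of G with μ(I) > μ(N(I)). -/

import Mathlib

open Finset Filter

/-- `I` is an independent set of vertices in `G`. -/
def IsIndepSet {V : Type*} (G : SimpleGraph V) (I : Finset V) : Prop :=
  ∀ u ∈ I, ∀ v ∈ I, ¬ G.Adj u v

/-- The neighborhood `N(I)`: vertices adjacent to at least one vertex of `I`. -/
noncomputable def nbhd {V : Type*} [Fintype V] (G : SimpleGraph V) (I : Finset V) : Finset V :=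
  @Finset.filter _ (fun v => ∃ u ∈ I, G.Adj u v) (Classical.decPred _) Finset.univ

/-- Measure of a finite set of vertices: sum of the weights. -/
def fmeas {V : Type*} (μ : V → ℝ) (S : Finset V) : ℝ := ∑ v ∈ S, μ v

/-- The `n`-fold tensor (categorical) power of `G`. -/
def tpow {V : Type*} (G : SimpleGraph V) (n : ℕ) : SimpleGraph (Fin n → V) where
  Adj u v := u ≠ v ∧ ∀ i, G.Adj (u i) (v i)
  symm := ⟨fun u v h => ⟨h.1.symm, fun i => (h.2 i).symm⟩⟩
  loopless := ⟨fun u h => h.1 rfl⟩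

/-- Product measure of a set of `n`-tuples. -/
noncomputable def pmeas {V : Type*} (μ : V → ℝ) (n : ℕ) (S : Finset (Fin n → V)) : ℝ :=
  ∑ x ∈ S, ∏ i, μ (x i)

/-- `ᾱ(G)`: the supremum (= maximum) of the measures of independent sets of `G`. -/
noncomputable def alphaBar {V : Type*} (G : SimpleGraph V) (μ : V → ℝ) : ℝ :=
  sSup {x : ℝ | ∃ I : Finset V, IsIndepSet G I ∧ x = fmeas μ I}

/-- `ᾱ(G^n)` with the product measure. -/
noncomputable def alphaPow {V : Type*} (G : SimpleGraph V) (μ : V → ℝ) (n : ℕ) : ℝ :=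
  alphaBar (tpow G n) (fun x => ∏ i, μ (x i))

section Aux
open scoped Classical
set_option linter.unusedSectionVars false
variable {V : Type*} [Fintype V] {G : SimpleGraph V} {μ : V → ℝ}

lemma mem_nbhd {I : Finset V} {v : V} : v ∈ nbhd G I ↔ ∃ u ∈ I, G.Adj u v := by
  simp [nbhd]

lemma fmeas_nonneg (hμ0 : ∀ v, 0 ≤ μ v) (S : Finset V) : 0 ≤ fmeas μ S :=
  Finset.sum_nonneg fun v _ => hμ0 v

lemma fmeas_mono (hμ0 : ∀ v, 0 ≤ μ v) {S T : Finset V} (h : S ⊆ T) : fmeas μ S ≤ fmeas μ T :=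
  Finset.sum_le_sum_of_subset_of_nonneg h fun v _ _ => hμ0 v

lemma stepA (hμ0 : ∀ v, 0 ≤ μ v)
    (hind : ∀ I, IsIndepSet G I → fmeas μ I ≤ fmeas μ (nbhd G I)) :
    ∀ A : Finset V, fmeas μ A ≤ fmeas μ (nbhd G A) := by
  classical
  intro A
  set I := A \ nbhd G A with hIdef
  have hI : IsIndepSet G I := by
    intro u hu v hv hadj
    exact (Finset.mem_sdiff.1 hv).2 (mem_nbhd.2 ⟨u, (Finset.mem_sdiff.1 hu).1, hadj⟩)
  have h1 : nbhd G I ⊆ nbhd G A := by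
    intro v hv
    obtain ⟨u, hu, hadj⟩ := mem_nbhd.1 hv
    exact mem_nbhd.2 ⟨u, (Finset.mem_sdiff.1 hu).1, hadj⟩
  have h2 : Disjoint (nbhd G I) (A ∩ nbhd G A) := by
    rw [Finset.disjoint_left]
    intro b hb hb2
    obtain ⟨i, hi, hadj⟩ := mem_nbhd.1 hb
    exact (Finset.mem_sdiff.1 hi).2 (mem_nbhd.2 ⟨b, (Finset.mem_inter.1 hb2).1, hadj.symm⟩)
  have hsplit : fmeas μ A = fmeas μ I + fmeas μ (A ∩ nbhd G A) := by
    rw [fmeas, fmeas, fmeas, ← Finset.sum_union (Finset.disjoint_sdiff_inter A (nbhd G A)),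
      Finset.sdiff_union_inter]
  have hunion : fmeas μ (nbhd G I) + fmeas μ (A ∩ nbhd G A)
      = fmeas μ (nbhd G I ∪ (A ∩ nbhd G A)) := (Finset.sum_union h2).symm
  have hsub : nbhd G I ∪ (A ∩ nbhd G A) ⊆ nbhd G A :=
    Finset.union_subset h1 (Finset.inter_subset_right)
  calc fmeas μ A = fmeas μ I + fmeas μ (A ∩ nbhd G A) := hsplit
    _ ≤ fmeas μ (nbhd G I) + fmeas μ (A ∩ nbhd G A) := by
        have := hind I hI; linarith
    _ = fmeas μ (nbhd G I ∪ (A ∩ nbhd G A)) := hunion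
    _ ≤ fmeas μ (nbhd G A) := fmeas_mono hμ0 hsub

lemma layerCake (hμ0 : ∀ v, 0 ≤ μ v)
    (hQ : ∀ A : Finset V, fmeas μ A ≤ fmeas μ (nbhd G A)) :
    ∀ (k : ℕ) (f F : V → ℝ), (Finset.univ.filter (fun v => 0 < f v)).card ≤ k →
    (∀ v, 0 ≤ f v) → (∀ v, 0 ≤ F v) → (∀ u v, G.Adj u v → f u ≤ F v) →
    ∑ v, μ v * f v ≤ ∑ v, μ v * F v := by
  classical
  intro k
  induction k with
  | zero =>
    intro f F hcard hf hF _
    have hfz : ∀ v, f v = 0 := by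
      intro v
      by_contra h
      have hv : v ∈ Finset.univ.filter (fun v => 0 < f v) :=
        Finset.mem_filter.2 ⟨Finset.mem_univ v, lt_of_le_of_ne (hf v) (Ne.symm h)⟩
      have := Finset.card_pos.2 ⟨v, hv⟩
      omega
    calc ∑ v, μ v * f v = 0 := by simp [hfz]
      _ ≤ ∑ v, μ v * F v := Finset.sum_nonneg fun v _ => mul_nonneg (hμ0 v) (hF v)
  | succ k ih =>
    intro f F hcard hf hF hadj
    set A : Finset V := Finset.univ.filter (fun v => 0 < f v) with hAdef
    by_cases hA : A.Nonempty
    · set c : ℝ := A.inf' hA f with hcdef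
      obtain ⟨v₀, hv₀, hv₀c⟩ := Finset.exists_mem_eq_inf' hA f
      have hcpos : 0 < c := by
        rw [hcdef, hv₀c]
        exact (Finset.mem_filter.1 hv₀).2
      have hcle : ∀ v ∈ A, c ≤ f v := fun v hv => Finset.inf'_le f hv
      set f' : V → ℝ := fun v => f v - (if v ∈ A then c else 0) with hf'def
      set F' : V → ℝ := fun v => F v - (if v ∈ nbhd G A then c else 0) with hF'def
      have hf'0 : ∀ v, 0 ≤ f' v := by
        intro v; by_cases h : v ∈ A <;> simp [hf'def, h, hf v, sub_nonneg, hcle v]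
      have hFc : ∀ v ∈ nbhd G A, c ≤ F v := by
        intro v hv
        obtain ⟨u, hu, huv⟩ := mem_nbhd.1 hv
        exact le_trans (hcle u hu) (hadj u v huv)
      have hF'0 : ∀ v, 0 ≤ F' v := by
        intro v; by_cases h : v ∈ nbhd G A <;>
          simp [hF'def, h, hF v, sub_nonneg, hFc v]
      have hadj' : ∀ u v, G.Adj u v → f' u ≤ F' v := by
        intro u v huv
        by_cases h : u ∈ A
        · have hv : v ∈ nbhd G A := mem_nbhd.2 ⟨u, h, huv⟩
          simp only [hf'def, hF'def, if_pos h, if_pos hv]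
          linarith [hadj u v huv]
        · have : f u = 0 := by
            by_contra hne
            exact h (Finset.mem_filter.2 ⟨Finset.mem_univ u,
              lt_of_le_of_ne (hf u) (Ne.symm hne)⟩)
          simp only [hf'def, if_neg h, this, sub_zero]
          exact hF'0 v
      have hf'v₀ : f' v₀ = 0 := by simp [hf'def, hv₀, ← hv₀c, hcdef]
      have hsub : Finset.univ.filter (fun v => 0 < f' v) ⊂ A := by
        apply Finset.ssubset_iff_of_subset ?_ |>.2 ⟨v₀, hv₀, by simp [hf'v₀]⟩
        · intro v hv
          have h1 : 0 < f' v := (Finset.mem_filter.1 hv).2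
          by_contra h
          simp [hf'def, if_neg h] at h1
          have : f v = 0 := by
            by_contra hne
            exact h (Finset.mem_filter.2 ⟨Finset.mem_univ v,
              lt_of_le_of_ne (hf v) (Ne.symm hne)⟩)
          simp [this] at h1
      have hcard' : (Finset.univ.filter (fun v => 0 < f' v)).card ≤ k := by
        have := Finset.card_lt_card hsub
        omega
      have hIH := ih f' F' hcard' hf'0 hF'0 hadj'
      have hsum1 : ∑ v, μ v * f v = (∑ v, μ v * f' v) + c * fmeas μ A := by
        rw [fmeas, Finset.mul_sum, ← Finset.sum_filter_add_sum_filter_not Finset.univ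
          (fun v => v ∈ A) (fun v => μ v * f v),
          ← Finset.sum_filter_add_sum_filter_not Finset.univ
          (fun v => v ∈ A) (fun v => μ v * f' v)]
        have e1 : Finset.univ.filter (fun v => v ∈ A) = A := by
          ext v; simp
        rw [e1]
        have e2 : ∀ v ∈ A, μ v * f' v = μ v * f v - c * μ v := by
          intro v hv; simp [hf'def, if_pos hv]; ring
        have e3 : ∀ v ∈ Finset.univ.filter (fun v => ¬ v ∈ A), μ v * f' v = μ v * f v := by
          intro v hv; simp [hf'def, if_neg (Finset.mem_filter.1 hv).2]
        rw [Finset.sum_congr rfl e2, Finset.sum_congr rfl e3, Finset.sum_sub_distrib]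
        ring
      have hsum2 : ∑ v, μ v * F v = (∑ v, μ v * F' v) + c * fmeas μ (nbhd G A) := by
        rw [fmeas, Finset.mul_sum, ← Finset.sum_filter_add_sum_filter_not Finset.univ
          (fun v => v ∈ nbhd G A) (fun v => μ v * F v),
          ← Finset.sum_filter_add_sum_filter_not Finset.univ
          (fun v => v ∈ nbhd G A) (fun v => μ v * F' v)]
        have e1 : Finset.univ.filter (fun v => v ∈ nbhd G A) = nbhd G A := by
          ext v; simp
        rw [e1]
        have e2 : ∀ v ∈ nbhd G A, μ v * F' v = μ v * F v - c * μ v := by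
          intro v hv; simp [hF'def, if_pos hv]; ring
        have e3 : ∀ v ∈ Finset.univ.filter (fun v => ¬ v ∈ nbhd G A),
            μ v * F' v = μ v * F v := by
          intro v hv; simp [hF'def, if_neg (Finset.mem_filter.1 hv).2]
        rw [Finset.sum_congr rfl e2, Finset.sum_congr rfl e3, Finset.sum_sub_distrib]
        ring
      have hQc : c * fmeas μ A ≤ c * fmeas μ (nbhd G A) :=
        mul_le_mul_of_nonneg_left (hQ A) hcpos.le
      linarith
    · have hfz : ∀ v, f v = 0 := by
        intro v
        by_contra h
        exact hA ⟨v, Finset.mem_filter.2 ⟨Finset.mem_univ v,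
          lt_of_le_of_ne (hf v) (Ne.symm h)⟩⟩
      calc ∑ v, μ v * f v = 0 := by simp [hfz]
        _ ≤ ∑ v, μ v * F v := Finset.sum_nonneg fun v _ => mul_nonneg (hμ0 v) (hF v)

lemma pprod_nonneg (hμ0 : ∀ v, 0 ≤ μ v) {n : ℕ} (x : Fin n → V) :
    0 ≤ ∏ i, μ (x i) := Finset.prod_nonneg fun i _ => hμ0 (x i)

lemma pmeas_eq_fmeas {n : ℕ} (S : Finset (Fin n → V)) :
    pmeas μ n S = fmeas (fun x => ∏ i, μ (x i)) S := rfl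

lemma pmeas_nonneg (hμ0 : ∀ v, 0 ≤ μ v) {n : ℕ} (S : Finset (Fin n → V)) :
    0 ≤ pmeas μ n S := Finset.sum_nonneg fun x _ => pprod_nonneg hμ0 x

lemma pmeas_mono (hμ0 : ∀ v, 0 ≤ μ v) {n : ℕ} {S T : Finset (Fin n → V)} (h : S ⊆ T) :
    pmeas μ n S ≤ pmeas μ n T :=
  Finset.sum_le_sum_of_subset_of_nonneg h fun x _ _ => pprod_nonneg hμ0 x

lemma sum_prod_pi (hμ1 : ∑ v, μ v = 1) {n : ℕ} :
    ∑ x : Fin n → V, ∏ i, μ (x i) = 1 := by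
  classical
  rw [← Fintype.prod_sum (fun (_ : Fin n) (v : V) => μ v)]
  simp [hμ1]

lemma pmeas_univ (hμ1 : ∑ v, μ v = 1) {n : ℕ} :
    pmeas μ n (Finset.univ : Finset (Fin n → V)) = 1 := sum_prod_pi hμ1

lemma pmeas_le_one (hμ0 : ∀ v, 0 ≤ μ v) (hμ1 : ∑ v, μ v = 1) {n : ℕ}
    (S : Finset (Fin n → V)) : pmeas μ n S ≤ 1 := by
  rw [← pmeas_univ (μ := μ) hμ1 (n := n)]
  exact pmeas_mono hμ0 (Finset.subset_univ S)

lemma pmeas_eq_sum_ite {n : ℕ} (S : Finset (Fin n → V)) :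
    pmeas μ n S = ∑ x : Fin n → V, if x ∈ S then ∏ i, μ (x i) else 0 := by
  classical
  simp [pmeas, Finset.sum_ite_mem]

end Aux

/-- slice0 of a set of (n+1)-tuples at first coordinate g -/
noncomputable def slice0 {V : Type*} [Fintype V] {n : ℕ} (g : V)
    (T : Finset (Fin (n+1) → V)) : Finset (Fin n → V) :=
  @Finset.filter _ (fun y => Fin.cons g y ∈ T) (Classical.decPred _) Finset.univ

/-- neighborhood-like operator in the n-th tensor power (no u ≠ v condition) -/
noncomputable def NB {V : Type*} [Fintype V] (G : SimpleGraph V) (n : ℕ)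
    (S : Finset (Fin n → V)) : Finset (Fin n → V) :=
  @Finset.filter _ (fun y => ∃ x ∈ S, ∀ i, G.Adj (x i) (y i)) (Classical.decPred _) Finset.univ

section Aux2
set_option linter.unusedSectionVars false
variable {V : Type*} [Fintype V] {G : SimpleGraph V} {μ : V → ℝ}

lemma mem_slice0 {n : ℕ} {g : V} {T : Finset (Fin (n+1) → V)} {y : Fin n → V} :
    y ∈ slice0 g T ↔ Fin.cons g y ∈ T := by simp [slice0]

lemma mem_NB {n : ℕ} {S : Finset (Fin n → V)} {y : Fin n → V} :
    y ∈ NB G n S ↔ ∃ x ∈ S, ∀ i, G.Adj (x i) (y i) := by simp [NB]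

lemma pmeas_succ {n : ℕ} (T : Finset (Fin (n+1) → V)) :
    pmeas μ (n+1) T = ∑ g, μ g * pmeas μ n (slice0 g T) := by
  classical
  rw [pmeas_eq_sum_ite]
  rw [← Equiv.sum_comp (Fin.consEquiv (fun _ : Fin (n+1) => V))
    (fun x => if x ∈ T then ∏ i, μ (x i) else 0)]
  rw [Fintype.sum_prod_type]
  refine Finset.sum_congr rfl fun g _ => ?_
  rw [pmeas_eq_sum_ite, Finset.mul_sum]
  refine Finset.sum_congr rfl fun y _ => ?_
  simp only [Fin.consEquiv, Equiv.coe_fn_mk]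
  have hprod : ∏ i, μ ((Fin.cons g y : Fin (n+1) → V) i) = μ g * ∏ i : Fin n, μ (y i) := by
    rw [Fin.prod_univ_succ]
    simp
  rw [hprod]
  by_cases h : (Fin.cons g y : Fin (n+1) → V) ∈ T
  · rw [if_pos (mem_slice0.2 h)]; exact if_pos h
  · rw [if_neg (fun hc => h (mem_slice0.1 hc)), mul_zero]; exact if_neg h

lemma key (hμ0 : ∀ v, 0 ≤ μ v)
    (hQ : ∀ A : Finset V, fmeas μ A ≤ fmeas μ (nbhd G A)) :
    ∀ (n : ℕ) (S : Finset (Fin n → V)), pmeas μ n S ≤ pmeas μ n (NB G n S) := by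
  intro n
  induction n with
  | zero =>
    intro S
    refine pmeas_mono hμ0 fun x hx => mem_NB.2 ⟨x, hx, fun i => i.elim0⟩
  | succ n ih =>
    intro S
    rw [pmeas_succ S, pmeas_succ (NB G (n+1) S)]
    refine layerCake hμ0 hQ
      ((Finset.univ.filter (fun v => 0 < pmeas μ n (slice0 v S))).card)
      (fun g => pmeas μ n (slice0 g S)) (fun g => pmeas μ n (slice0 g (NB G (n+1) S)))
      le_rfl (fun g => pmeas_nonneg hμ0 _) (fun g => pmeas_nonneg hμ0 _) ?_
    intro g g' hadj
    refine le_trans (ih (slice0 g S)) (pmeas_mono hμ0 ?_)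
    intro y' hy'
    obtain ⟨y, hy, hyadj⟩ := mem_NB.1 hy'
    rw [mem_slice0] at hy ⊢
    rw [mem_NB]
    refine ⟨Fin.cons g y, hy, fun i => ?_⟩
    refine Fin.cases ?_ ?_ i
    · simpa using hadj
    · intro j; simpa using hyadj j

lemma alphaPow_le {n : ℕ} {a : ℝ} (ha : 0 ≤ a)
    (hub : ∀ S : Finset (Fin n → V), IsIndepSet (tpow G n) S → pmeas μ n S ≤ a) :
    alphaPow G μ n ≤ a := by
  refine Real.sSup_le ?_ ha
  rintro x ⟨S, hS, rfl⟩
  exact hub S hS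

lemma le_alphaPow (hμ0 : ∀ v, 0 ≤ μ v) (hμ1 : ∑ v, μ v = 1) {n : ℕ}
    (S : Finset (Fin n → V)) (hS : IsIndepSet (tpow G n) S) :
    pmeas μ n S ≤ alphaPow G μ n := by
  refine le_csSup ⟨1, ?_⟩ ⟨S, hS, rfl⟩
  rintro x ⟨T, hT, rfl⟩
  exact pmeas_le_one hμ0 hμ1 T

lemma alphaPow_le_one (hμ0 : ∀ v, 0 ≤ μ v) (hμ1 : ∑ v, μ v = 1) (n : ℕ) :
    alphaPow G μ n ≤ 1 :=
  alphaPow_le zero_le_one fun S _ => pmeas_le_one hμ0 hμ1 S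

lemma alphaPow_le_half (hμ0 : ∀ v, 0 ≤ μ v) (hμ1 : ∑ v, μ v = 1)
    (hind : ∀ I : Finset V, IsIndepSet G I → fmeas μ I ≤ fmeas μ (nbhd G I))
    {n : ℕ} (hn : 1 ≤ n) : alphaPow G μ n ≤ 1 / 2 := by
  classical
  refine alphaPow_le (by norm_num) fun S hS => ?_
  have hk := key hμ0 (stepA hμ0 hind) n S
  have hdisj : Disjoint S (NB G n S) := by
    rw [Finset.disjoint_left]
    intro x hxS hxN
    obtain ⟨u, huS, hadj⟩ := mem_NB.1 hxN
    have hne : u ≠ x := by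
      intro he
      subst he
      exact G.loopless.irrefl _ (hadj ⟨0, hn⟩)
    exact hS u huS x hxS (show u ≠ x ∧ ∀ i, G.Adj (u i) (x i) from ⟨hne, hadj⟩)
  have hsum : pmeas μ n S + pmeas μ n (NB G n S) = pmeas μ n (S ∪ NB G n S) := by
    rw [pmeas, pmeas, pmeas, ← Finset.sum_union hdisj]
  have hle1 : pmeas μ n (S ∪ NB G n S) ≤ 1 := pmeas_le_one hμ0 hμ1 _
  linarith

lemma inner_eq (hμ1 : ∑ v, μ v = 1) (w : V → ℝ) (hw0 : ∑ v, μ v * w v = 0)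
    {n : ℕ} (i j : Fin n) :
    ∑ x : Fin n → V, (∏ k, μ (x k)) * (w (x i) * w (x j))
      = if i = j then ∑ v, μ v * (w v)^2 else 0 := by
  classical
  have hterm : ∀ x : Fin n → V, (∏ k, μ (x k)) * (w (x i) * w (x j))
      = ∏ k, (μ (x k) * (if k = i then w (x k) else 1) * (if k = j then w (x k) else 1)) := by
    intro x
    rw [Finset.prod_mul_distrib, Finset.prod_mul_distrib,
      Finset.prod_ite_eq' Finset.univ i (fun k => w (x k)),
      Finset.prod_ite_eq' Finset.univ j (fun k => w (x k))]
    simp only [Finset.mem_univ, if_pos]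
    ring
  rw [Finset.sum_congr rfl fun x _ => hterm x,
    ← Fintype.prod_sum (fun (k : Fin n) (v : V) =>
      μ v * (if k = i then w v else 1) * (if k = j then w v else 1))]
  by_cases hij : i = j
  · subst hij
    rw [if_pos rfl]
    rw [Finset.prod_eq_single i]
    · refine Finset.sum_congr rfl fun v _ => ?_
      simp [sq, mul_assoc]
    · intro k _ hk
      simp [hk, hμ1]
    · simp
  · rw [if_neg hij]
    refine Finset.prod_eq_zero (Finset.mem_univ i) ?_
    simpa [hij] using hw0

lemma comp_eq (hμ1 : ∑ v, μ v = 1) (w : V → ℝ) (hw0 : ∑ v, μ v * w v = 0) (n : ℕ) :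
    ∑ x : Fin n → V, (∏ k, μ (x k)) * (∑ i, w (x i))^2
      = n * ∑ v, μ v * (w v)^2 := by
  classical
  have hsq : ∀ x : Fin n → V, (∑ i, w (x i))^2
      = ∑ p : Fin n × Fin n, w (x p.1) * w (x p.2) := by
    intro x
    rw [sq, Finset.sum_mul_sum, Fintype.sum_prod_type]
  calc ∑ x : Fin n → V, (∏ k, μ (x k)) * (∑ i, w (x i))^2
      = ∑ x : Fin n → V, ∑ p : Fin n × Fin n, (∏ k, μ (x k)) * (w (x p.1) * w (x p.2)) := by
        refine Finset.sum_congr rfl fun x _ => ?_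
        rw [hsq, Finset.mul_sum]
    _ = ∑ p : Fin n × Fin n, ∑ x : Fin n → V, (∏ k, μ (x k)) * (w (x p.1) * w (x p.2)) :=
        Finset.sum_comm
    _ = ∑ p : Fin n × Fin n, if p.1 = p.2 then ∑ v, μ v * (w v)^2 else 0 :=
        Finset.sum_congr rfl fun p _ => inner_eq hμ1 w hw0 p.1 p.2
    _ = n * ∑ v, μ v * (w v)^2 := by
        rw [Fintype.sum_prod_type]
        simp [Finset.sum_ite_eq, Finset.card_univ]

end Aux2

section Final
open scoped Classical
variable {V : Type*} [Fintype V] {G : SimpleGraph V} {μ : V → ℝ}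

lemma tendsto_one (hμ0 : ∀ v, 0 ≤ μ v) (hμ1 : ∑ v, μ v = 1)
    (I : Finset V) (hI : IsIndepSet G I) (hgap : fmeas μ (nbhd G I) < fmeas μ I) :
    Tendsto (fun n => alphaPow G μ n) atTop (nhds 1) := by
  classical
  set z : V → ℝ := fun v => (if v ∈ I then (1:ℝ) else 0) - (if v ∈ nbhd G I then 1 else 0)
    with hzdef
  have hdisjI : ∀ v ∈ I, v ∉ nbhd G I := by
    intro v hv hvN
    obtain ⟨u, hu, hadj⟩ := mem_nbhd.1 hvN
    exact hI u hu v hv hadj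
  have hz_adj : ∀ a b, G.Adj a b → z a + z b ≤ 0 := by
    intro a b hadj
    by_cases haI : a ∈ I <;> by_cases hbI : b ∈ I
    · exact absurd hadj (hI a haI b hbI)
    · have hbN : b ∈ nbhd G I := mem_nbhd.2 ⟨a, haI, hadj⟩
      simp [hzdef, haI, hbI, hbN, hdisjI a haI]
    · have haN : a ∈ nbhd G I := mem_nbhd.2 ⟨b, hbI, hadj.symm⟩
      simp [hzdef, haI, hbI, haN, hdisjI b hbI]
    · simp only [hzdef, if_neg haI, if_neg hbI, zero_sub]
      have h1 : (0:ℝ) ≤ (if a ∈ nbhd G I then (1:ℝ) else 0) := by positivity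
      have h2 : (0:ℝ) ≤ (if b ∈ nbhd G I then (1:ℝ) else 0) := by positivity
      linarith
  set ε : ℝ := fmeas μ I - fmeas μ (nbhd G I) with hεdef
  have hεpos : 0 < ε := by rw [hεdef]; linarith
  have hite : ∀ (T : Finset V), ∑ v, μ v * (if v ∈ T then (1:ℝ) else 0) = fmeas μ T := by
    intro T
    rw [fmeas]
    simp [mul_ite, Finset.sum_ite_mem]
  have hEz : ∑ v, μ v * z v = ε := by
    calc ∑ v, μ v * z v
        = (∑ v, μ v * (if v ∈ I then (1:ℝ) else 0))
          - ∑ v, μ v * (if v ∈ nbhd G I then (1:ℝ) else 0) := by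
          rw [← Finset.sum_sub_distrib]
          refine Finset.sum_congr rfl fun v _ => by rw [hzdef]; ring
      _ = ε := by rw [hite, hite, hεdef]
  set w : V → ℝ := fun v => z v - ε with hwdef
  have hw0 : ∑ v, μ v * w v = 0 := by
    calc ∑ v, μ v * w v = (∑ v, μ v * z v) - ε * ∑ v, μ v := by
          rw [Finset.mul_sum, ← Finset.sum_sub_distrib]
          refine Finset.sum_congr rfl fun v _ => by rw [hwdef]; ring
      _ = 0 := by rw [hEz, hμ1]; ring
  set C : ℝ := ∑ v, μ v * (w v)^2 with hCdef
  have hC0 : 0 ≤ C := Finset.sum_nonneg fun v _ => mul_nonneg (hμ0 v) (sq_nonneg _)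
  -- the independent sets Sₙ
  have hlow : ∀ n : ℕ, 1 ≤ n → 1 - (C / ε^2) / n ≤ alphaPow G μ n := by
    intro n hn
    set Sn : Finset (Fin n → V) :=
      Finset.univ.filter (fun x => 0 < ∑ i, z (x i)) with hSndef
    set Tn : Finset (Fin n → V) :=
      Finset.univ.filter (fun x => ¬ 0 < ∑ i, z (x i)) with hTndef
    have hSind : IsIndepSet (tpow G n) Sn := by
      intro u hu v hv hadj
      have hu' : 0 < ∑ i, z (u i) := (Finset.mem_filter.1 hu).2
      have hv' : 0 < ∑ i, z (v i) := (Finset.mem_filter.1 hv).2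
      have hsum : (∑ i, z (u i)) + ∑ i, z (v i) ≤ 0 := by
        rw [← Finset.sum_add_distrib]
        exact Finset.sum_nonpos fun i _ => hz_adj (u i) (v i) ((show u ≠ v ∧ ∀ i, G.Adj (u i) (v i) from hadj).2 i)
      linarith
    have hpart : pmeas μ n Sn + pmeas μ n Tn = 1 := by
      have h := Finset.sum_filter_add_sum_filter_not (Finset.univ : Finset (Fin n → V))
        (fun x => 0 < ∑ i, z (x i)) (fun x => ∏ i, μ (x i))
      rw [pmeas, pmeas, hSndef, hTndef, h]
      exact sum_prod_pi hμ1
    have hwsum : ∀ x : Fin n → V, ∑ i, w (x i) = (∑ i, z (x i)) - n * ε := by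
      intro x
      have h : ∑ i : Fin n, w (x i) = ∑ i : Fin n, (z (x i) - ε) := rfl
      rw [h, Finset.sum_sub_distrib, Finset.sum_const, Finset.card_univ, Fintype.card_fin,
        nsmul_eq_mul]
    have hcheb : pmeas μ n Tn * (n * ε)^2 ≤ n * C := by
      calc pmeas μ n Tn * (n * ε)^2
          = ∑ x ∈ Tn, (∏ k, μ (x k)) * (n * ε)^2 := by rw [pmeas, Finset.sum_mul]
        _ ≤ ∑ x ∈ Tn, (∏ k, μ (x k)) * (∑ i, w (x i))^2 := by
            refine Finset.sum_le_sum fun x hx => ?_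
            refine mul_le_mul_of_nonneg_left ?_ (pprod_nonneg hμ0 x)
            have hxz : ∑ i, z (x i) ≤ 0 := le_of_not_gt (Finset.mem_filter.1 hx).2
            have h1 : ∑ i, w (x i) ≤ -(n * ε) := by rw [hwsum x]; linarith
            have h2 : (0:ℝ) ≤ n * ε := by positivity
            calc (n * ε)^2 ≤ (-(∑ i, w (x i)))^2 := by
                  refine pow_le_pow_left₀ h2 (by linarith) 2
              _ = (∑ i, w (x i))^2 := neg_sq _
        _ ≤ ∑ x : Fin n → V, (∏ k, μ (x k)) * (∑ i, w (x i))^2 := by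
            refine Finset.sum_le_sum_of_subset_of_nonneg (Finset.filter_subset _ _)
              fun x _ _ => mul_nonneg (pprod_nonneg hμ0 x) (sq_nonneg _)
        _ = n * C := comp_eq hμ1 w hw0 n
    have hnpos : (0:ℝ) < n := by exact_mod_cast hn
    have hTle : pmeas μ n Tn ≤ (C / ε^2) / n := by
      have hd : (0:ℝ) < (n * ε)^2 := by positivity
      have h3 : pmeas μ n Tn ≤ (n * C) / (n * ε)^2 := by
        rw [le_div_iff₀ hd]; exact hcheb
      have h4 : (n * C) / (n * ε)^2 = (C / ε^2) / n := by
        field_simp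
      linarith [h3, h4.le, h4.ge]
    have hSn : 1 - (C / ε^2) / n ≤ pmeas μ n Sn := by linarith
    exact le_trans hSn (le_alphaPow hμ0 hμ1 Sn hSind)
  refine tendsto_of_tendsto_of_tendsto_of_le_of_le'
    (g := fun n : ℕ => 1 - (C / ε^2) / n) (h := fun _ : ℕ => (1:ℝ)) ?_ ?_ ?_ ?_
  · have := tendsto_const_div_atTop_nhds_zero_nat (C / ε^2)
    simpa using tendsto_const_nhds.sub this
  · exact tendsto_const_nhds
  · exact eventually_atTop.2 ⟨1, fun n hn => hlow n hn⟩
  · exact Eventually.of_forall fun n => alphaPow_le_one hμ0 hμ1 n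

end Final

theorem stmt_14 {V : Type*} [Fintype V] (G : SimpleGraph V) (μ : V → ℝ)
    (hμ0 : ∀ v, 0 ≤ μ v) (hμ1 : ∑ v, μ v = 1) :
    ((∃ n : ℕ, 1 ≤ n ∧ 1 / 2 < alphaPow G μ n) ↔
      Tendsto (fun n => alphaPow G μ n) atTop (nhds 1)) ∧
    (Tendsto (fun n => alphaPow G μ n) atTop (nhds 1) ↔
      ∃ I : Finset V, IsIndepSet G I ∧ fmeas μ I > fmeas μ (nbhd G I)) := by
  classical
  have hac : ∀ n : ℕ, 1 ≤ n → 1 / 2 < alphaPow G μ n →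
      ∃ I : Finset V, IsIndepSet G I ∧ fmeas μ I > fmeas μ (nbhd G I) := by
    intro n hn1 hn2
    by_contra h
    push_neg at h
    have := alphaPow_le_half hμ0 hμ1 (fun I hI => h I hI) hn1
    linarith
  have hcb : (∃ I : Finset V, IsIndepSet G I ∧ fmeas μ I > fmeas μ (nbhd G I)) →
      Tendsto (fun n => alphaPow G μ n) atTop (nhds 1) := by
    rintro ⟨I, hI, hg⟩
    exact tendsto_one hμ0 hμ1 I hI hg
  have hba : Tendsto (fun n => alphaPow G μ n) atTop (nhds 1) →
      ∃ n : ℕ, 1 ≤ n ∧ 1 / 2 < alphaPow G μ n := by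
    intro hb
    exact ((eventually_ge_atTop 1).and
      (hb.eventually (eventually_gt_nhds (by norm_num : (1:ℝ)/2 < 1)))).exists
  refine ⟨⟨?_, hba⟩, ⟨?_, hcb⟩⟩
  · rintro ⟨n, hn1, hn2⟩
    exact hcb (hac n hn1 hn2)
  · intro hb
    obtain ⟨n, hn1, hn2⟩ := hba hb
    exact hac n hn1 hn2
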